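/- Let k ≥ 2 be a fixed integer. With probability tending to 1 as n → ∞, one can add at most (1/4 + o(1))·n²/(k-1) edges to the binomial random graph G(n,1/2) so that the vertex set of the resulting graph is covered by k-1 cliques; in particular, the resulting graph contains no induced copy of the cycle C_{2k}. -/

import Mathlib

open MeasureTheory Filter

/-- The Bernoulli measure with parameter `p` on `Bool`. -/
noncomputable def bernoulliMeasure (p : ℝ) : Measure Bool :=
  (ENNReal.ofReal p) • Measure.dirac true + (ENNReal.ofReal (1 - p)) • Measure.dirac false

instance bernoulliMeasure_finite (p : ℝ) : IsFiniteMeasure (bernoulliMeasure p) := by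
  constructor
  simp only [bernoulliMeasure, Measure.add_apply, Measure.smul_apply, smul_eq_mul,
    measure_univ, mul_one]
  exact ENNReal.add_lt_top.mpr ⟨ENNReal.ofReal_lt_top, ENNReal.ofReal_lt_top⟩

/-- The distribution of the binomial random graph `G(n,p)`, as a measure on
edge-indicator functions. -/
noncomputable def gnp (n : ℕ) (p : ℝ) : Measure (Sym2 (Fin n) → Bool) :=
  Measure.pi fun _ => bernoulliMeasure p

/-- The graph on `Fin n` determined by an edge-indicator function. -/
def graphOfFn {n : ℕ} (ω : Sym2 (Fin n) → Bool) : SimpleGraph (Fin n) where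
  Adj v w := v ≠ w ∧ ω s(v, w) = true
  symm := ⟨fun v w ⟨h1, h2⟩ => ⟨h1.symm, by rwa [Sym2.eq_swap]⟩⟩
  loopless := ⟨fun v ⟨h1, _⟩ => h1 rfl⟩

open ProbabilityTheory


lemma cycle_triangle_free {m : ℕ} (hm : 4 ≤ m) {a b c : Fin m}
    (hab : (SimpleGraph.cycleGraph m).Adj a b) (hbc : (SimpleGraph.cycleGraph m).Adj b c)
    (hac : (SimpleGraph.cycleGraph m).Adj a c) : False := by
  have ne1 : a.val ≠ b.val := fun h => hab.ne (Fin.ext h)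
  have ne2 : b.val ≠ c.val := fun h => hbc.ne (Fin.ext h)
  have ne3 : a.val ≠ c.val := fun h => hac.ne (Fin.ext h)
  have key : ∀ x y : Fin m, (x - y).val = (m - y.val + x.val) % m := by
    intro x y; rw [Fin.sub_def]
  rw [SimpleGraph.cycleGraph_adj', key, key] at hab hbc hac
  have mod2 : ∀ x : ℕ, x < 2 * m → (x % m = x ∨ (m ≤ x ∧ x % m = x - m)) := by
    intro x hx
    rcases lt_or_ge x m with h | h
    · exact Or.inl (Nat.mod_eq_of_lt h)
    · refine Or.inr ⟨h, ?_⟩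
      rw [Nat.mod_eq_sub_mod h, Nat.mod_eq_of_lt (by omega)]
  have ha := a.isLt; have hb := b.isLt; have hc := c.isLt
  have step : ∀ x y : ℕ, x < m → y < m → x ≠ y →
      ((m - y + x) % m = 1 ∨ (m - x + y) % m = 1) →
      (x = y + 1 ∨ y = x + 1 ∨ (x = 0 ∧ y = m - 1) ∨ (y = 0 ∧ x = m - 1)) := by
    intro x y hx hy hxy h
    have h1 := mod2 (m - y + x) (by omega)
    have h2 := mod2 (m - x + y) (by omega)
    omega
  have f1 := step a.val b.val ha hb ne1 hab
  have f2 := step b.val c.val hb hc ne2 hbc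
  have f3 := step a.val c.val ha hc ne3 hac
  omega


/-- graph connecting vertices in the same block of size `q` -/
def pgraph (q n : ℕ) : SimpleGraph (Fin n) where
  Adj v w := v ≠ w ∧ v.val / q = w.val / q
  symm := ⟨fun v w ⟨h1, h2⟩ => ⟨h1.symm, h2.symm⟩⟩
  loopless := ⟨fun v ⟨h1, _⟩ => h1 rfl⟩

instance (q n : ℕ) : DecidableRel (pgraph q n).Adj := fun _ _ => instDecidableAnd

lemma fiber_card (n q i : ℕ) (hq : 0 < q) :
    (Finset.univ.filter (fun w : Fin n => w.val / q = i)).card ≤ q := by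
  classical
  have : ∀ w ∈ Finset.univ.filter (fun w : Fin n => w.val / q = i),
      w.val % q ∈ Finset.range q := fun w _ => Finset.mem_range.mpr (Nat.mod_lt _ hq)
  refine le_trans (Finset.card_le_card_of_injOn (fun w => w.val % q) this ?_) (by simp)
  intro w1 h1 w2 h2 hmod
  simp only [Finset.coe_filter, Set.mem_setOf_eq, Finset.mem_univ, true_and] at h1 h2
  simp only at hmod
  have e1 : q * i + w1.val % q = w1.val := by rw [← h1, Nat.div_add_mod]
  have e2 : q * i + w2.val % q = w2.val := by rw [← h2, Nat.div_add_mod]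
  rw [hmod] at e1
  exact Fin.ext (e1.symm.trans e2)

lemma pgraph_edges (q n : ℕ) (hq : 0 < q) :
    2 * (pgraph q n).edgeFinset.card ≤ n * q := by
  classical
  rw [← SimpleGraph.sum_degrees_eq_twice_card_edges]
  calc ∑ v : Fin n, (pgraph q n).degree v ≤ ∑ _v : Fin n, q := by
        refine Finset.sum_le_sum fun v _ => ?_
        rw [← SimpleGraph.card_neighborFinset_eq_degree]
        refine le_trans (Finset.card_le_card ?_) (fiber_card n q (v.val / q) hq)
        intro w hw
        simp only [SimpleGraph.mem_neighborFinset] at hw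
        simp only [Finset.mem_filter, Finset.mem_univ, true_and]
        exact hw.2.symm
      _ = n * q := by simp [mul_comm]

lemma det_main (k n : ℕ) (hk : 2 ≤ k) (ω : Sym2 (Fin n) → Bool) (B : ℝ)
    (hB : ((((pgraph (n/(k-1)+1) n).edgeFinset.filter (fun e => ω e = false)).card : ℝ) ≤ B)) :
    ∃ G' : SimpleGraph (Fin n), graphOfFn ω ≤ G' ∧
      ((G'.edgeSet \ (graphOfFn ω).edgeSet).ncard : ℝ) ≤ B ∧
      (∃ t : Fin (k - 1) → Set (Fin n),
        (∀ i, G'.IsClique (t i)) ∧ (⋃ i, t i) = Set.univ) ∧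
      ¬ ∃ S : Set (Fin n), Nonempty (SimpleGraph.cycleGraph (2 * k) ≃g G'.induce S) := by
  classical
  set q : ℕ := n / (k-1) + 1 with hq
  set P : SimpleGraph (Fin n) := pgraph q n with hP
  set G : SimpleGraph (Fin n) := graphOfFn ω with hG
  set D : Finset (Sym2 (Fin n)) := P.edgeFinset.filter (fun e => ω e = false) with hD
  -- the part-index function
  have hdiv : ∀ v : Fin n, v.val / q < k - 1 := by
    intro v
    have hkk : 0 < k - 1 := by omega
    have h1 := Nat.div_add_mod n (k-1)
    have h2 := Nat.mod_lt n hkk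
    have hvn := v.isLt
    -- n < q * (k-1)
    have hnq : n < q * (k-1) := by
      have hqe : q * (k-1) = (n/(k-1)) * (k-1) + (k-1) := by rw [hq]; ring
      have h1' : (n/(k-1)) * (k-1) + n % (k-1) = n := by rw [mul_comm]; exact h1
      omega
    exact Nat.div_lt_of_lt_mul (by omega)
  refine ⟨G ⊔ P, le_sup_left, ?_, ?_, ?_⟩
  · refine le_trans ?_ hB
    have hsub : (G ⊔ P).edgeSet \ G.edgeSet ⊆ (D : Set (Sym2 (Fin n))) := by
      intro e he
      induction e with
      | _ v w =>
        obtain ⟨he1, he2⟩ := he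
        rw [SimpleGraph.mem_edgeSet, SimpleGraph.sup_adj] at he1
        rw [SimpleGraph.mem_edgeSet] at he2
        rcases he1 with h | h
        · exact absurd h he2
        · have hωf : ω s(v, w) = false := by
            have hvw : v ≠ w := h.1
            by_contra hne
            exact he2 ⟨hvw, by simpa using hne⟩
          simp only [hD, Finset.coe_filter, Set.mem_setOf_eq, Finset.mem_coe,
            SimpleGraph.mem_edgeFinset, SimpleGraph.mem_edgeSet]
          exact ⟨h, hωf⟩
    have h2 : ((G ⊔ P).edgeSet \ G.edgeSet).ncard ≤ D.card := by
      rw [← Set.ncard_coe_finset]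
      exact Set.ncard_le_ncard hsub D.finite_toSet
    exact_mod_cast Nat.cast_le.mpr h2
  · refine ⟨fun i => {v | v.val / q = i.val}, ?_, ?_⟩
    · intro i v hv w hw hvw
      right
      exact ⟨hvw, by rw [Set.mem_setOf_eq] at hv hw; rw [hv, hw]⟩
    · ext v
      simp only [Set.mem_iUnion, Set.mem_univ, iff_true]
      exact ⟨⟨v.val / q, hdiv v⟩, rfl⟩
  · rintro ⟨S, ⟨φ⟩⟩
    set g : Fin (2*k) → Fin (k-1) := fun x => ⟨((φ x : S) : Fin n).val / q, hdiv _⟩ with hg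
    have hcard : Fintype.card (Fin (k-1)) * 2 < Fintype.card (Fin (2*k)) := by
      simp only [Fintype.card_fin]; omega
    obtain ⟨i, hi⟩ := Fintype.exists_lt_card_fiber_of_mul_lt_card g hcard
    rw [Finset.two_lt_card] at hi
    obtain ⟨a, ha, b, hb, c, hc, hab, hac, hbc⟩ := hi
    simp only [Finset.mem_filter, Finset.mem_univ, true_and] at ha hb hc
    -- the images are pairwise adjacent in cycleGraph
    have adj : ∀ x y : Fin (2*k), x ≠ y → g x = g y → (SimpleGraph.cycleGraph (2*k)).Adj x y := by
      intro x y hxy hgxy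
      rw [← φ.map_rel_iff]
      show ((G ⊔ P).induce S).Adj (φ x) (φ y)
      rw [SimpleGraph.comap_adj]
      right
      constructor
      · intro hvv
        exact hxy (φ.injective (Subtype.ext hvv))
      · have := congrArg Fin.val hgxy
        simpa using this
    exact cycle_triangle_free (by omega) (adj a b hab (ha.trans hb.symm))
      (adj b c hbc (hb.trans hc.symm)) (adj a c hac (ha.trans hc.symm))


instance : IsProbabilityMeasure (_root_.bernoulliMeasure (1/2)) := by
  constructor
  simp only [_root_.bernoulliMeasure, Measure.add_apply, Measure.smul_apply, smul_eq_mul,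
    measure_univ, mul_one]
  rw [← ENNReal.ofReal_add (by norm_num) (by norm_num)]
  norm_num

instance (n : ℕ) : IsProbabilityMeasure (gnp n (1/2)) := by
  unfold gnp; infer_instance

lemma bernoulli_false : _root_.bernoulliMeasure (1/2) {false} = ENNReal.ofReal (1/2) := by
  simp only [_root_.bernoulliMeasure, Measure.add_apply, Measure.smul_apply, smul_eq_mul]
  rw [Measure.dirac_apply' _ (measurableSet_singleton _),
    Measure.dirac_apply' _ (measurableSet_singleton _)]
  simp only [Set.indicator_apply, Set.mem_singleton_iff, Pi.one_apply]
  norm_num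

lemma gnp_eval_preimage {n : ℕ} (e : Sym2 (Fin n)) (s : Set Bool) :
    gnp n (1/2) ((fun ω => ω e) ⁻¹' s) = _root_.bernoulliMeasure (1/2) s := by
  classical
  have hset : (fun ω : Sym2 (Fin n) → Bool => ω e) ⁻¹' s =
      Set.pi Set.univ (fun i => if i = e then s else Set.univ) := by
    ext ω
    simp only [Set.mem_preimage, Set.mem_pi, Set.mem_univ, forall_true_left]
    constructor
    · intro h i; split <;> simp_all
    · intro h; have := h e; simpa using this
  rw [hset, gnp, Measure.pi_pi]
  have : ∀ i : Sym2 (Fin n), _root_.bernoulliMeasure (1/2) (if i = e then s else Set.univ) =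
      if i = e then _root_.bernoulliMeasure (1/2) s else 1 := by
    intro i; split
    · rfl
    · exact measure_univ
  simp_rw [this]
  rw [Finset.prod_ite_eq' Finset.univ e (fun _ => _root_.bernoulliMeasure (1/2) s)]
  simp

lemma gnp_iIndep (n : ℕ) :
    iIndepFun (fun (e : Sym2 (Fin n)) (ω : Sym2 (Fin n) → Bool) => ω e)
      (gnp n (1/2)) := by
  classical
  rw [iIndepFun_iff_measure_inter_preimage_eq_mul]
  intro S sets _
  have hset : (⋂ i ∈ S, (fun ω : Sym2 (Fin n) → Bool => ω i) ⁻¹' sets i) =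
      Set.pi Set.univ (fun i => if i ∈ S then sets i else Set.univ) := by
    ext ω
    simp only [Set.mem_iInter, Set.mem_preimage, Set.mem_pi, Set.mem_univ, forall_true_left]
    constructor
    · intro h i; split <;> simp_all
    · intro h i hi; have := h i; rw [if_pos hi] at this; exact this
  rw [hset, gnp, Measure.pi_pi]
  have : ∀ i : Sym2 (Fin n), _root_.bernoulliMeasure (1/2) (if i ∈ S then sets i else Set.univ) =
      if i ∈ S then _root_.bernoulliMeasure (1/2) (sets i) else 1 := by
    intro i; split
    · rfl
    · exact measure_univ
  simp_rw [this, Finset.prod_ite_mem Finset.univ S (fun i => _root_.bernoulliMeasure (1/2) (sets i)),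
    Finset.univ_inter]
  exact Finset.prod_congr rfl fun i _ => (gnp_eval_preimage i (sets i)).symm

namespace GnpAux
variable {n : ℕ}

/-- indicator that edge `e` is absent -/
noncomputable def X (e : Sym2 (Fin n)) (ω : Sym2 (Fin n) → Bool) : ℝ :=
  if ω e then 0 else 1

lemma X_eq_indicator (e : Sym2 (Fin n)) :
    X e = Set.indicator ((fun ω : Sym2 (Fin n) → Bool => ω e) ⁻¹' {false}) (fun _ => (1:ℝ)) := by
  funext ω
  cases h : ω e <;> simp [X, Set.indicator_apply, h]

lemma X_meas (e : Sym2 (Fin n)) : Measurable (X e) := by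
  have : X e = (fun b : Bool => if b then (0:ℝ) else 1) ∘ (fun ω => ω e) := rfl
  rw [this]
  exact measurable_from_top.comp (measurable_pi_apply e)

lemma X_memℒp (e : Sym2 (Fin n)) : MemLp (X e) 2 (gnp n (1/2)) := by
  refine MemLp.mono_exponent ?_ le_top
  refine memLp_top_of_bound (X_meas e).aestronglyMeasurable 1 (ae_of_all _ fun ω => ?_)
  simp only [X]
  split <;> simp

lemma X_integral (e : Sym2 (Fin n)) : ∫ ω, X e ω ∂(gnp n (1/2)) = 1/2 := by
  rw [X_eq_indicator]
  rw [integral_indicator_const (1:ℝ)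
    ((measurable_pi_apply e) (measurableSet_singleton false))]
  rw [measureReal_def]
  rw [gnp_eval_preimage e {false}, bernoulli_false]
  rw [ENNReal.toReal_ofReal (by norm_num)]
  norm_num

lemma X_sq (e : Sym2 (Fin n)) : (X e) ^ 2 = X e := by
  funext ω; simp only [Pi.pow_apply, X]; split <;> norm_num

lemma X_variance (e : Sym2 (Fin n)) : variance (X e) (gnp n (1/2)) = 1/4 := by
  rw [variance_eq_sub (X_memℒp e)]
  have h2 : ∫ x, ((X e) ^ 2) x ∂(gnp n (1/2)) = 1/2 := by
    rw [X_sq]; exact X_integral e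
  rw [h2, X_integral]
  norm_num

lemma X_iIndep :
    iIndepFun (fun (e : Sym2 (Fin n)) => X e) (gnp n (1/2)) := by
  have := (gnp_iIndep n).comp (fun _ (b : Bool) => if b then (0:ℝ) else 1)
    (fun _ => measurable_from_top)
  exact this

variable (E : Finset (Sym2 (Fin n)))

lemma N_memℒp : MemLp (∑ e ∈ E, X e) 2 (gnp n (1/2)) :=
  memLp_finset_sum' E fun e _ => X_memℒp e

lemma N_integral : ∫ ω, (∑ e ∈ E, X e) ω ∂(gnp n (1/2)) = E.card / 2 := by
  have : ∫ ω, (∑ e ∈ E, X e) ω ∂(gnp n (1/2)) = ∑ e ∈ E, ∫ ω, X e ω ∂(gnp n (1/2)) := by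
    simp_rw [Finset.sum_apply]
    exact integral_finset_sum E fun e _ => (X_memℒp e).integrable one_le_two
  rw [this]
  simp_rw [X_integral]
  simp [Finset.sum_const]
  ring

lemma N_variance : variance (∑ e ∈ E, X e) (gnp n (1/2)) = E.card / 4 := by
  rw [IndepFun.variance_sum (fun e _ => X_memℒp e)
    (fun e _ f _ hef => X_iIndep.indepFun hef)]
  simp_rw [X_variance]
  simp [Finset.sum_const]
  ring

lemma cheby (c : ℝ) (hc : 0 < c) :
    gnp n (1/2) {ω | c ≤ |(∑ e ∈ E, X e) ω - E.card / 2|} ≤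
      ENNReal.ofReal ((E.card / 4) / c ^ 2) := by
  have h := meas_ge_le_variance_div_sq (μ := gnp n (1/2)) (N_memℒp E) hc
  rw [N_variance E] at h
  rw [← N_integral E]
  exact h

end GnpAux

set_option maxHeartbeats 1000000 in
/-- Let `k ≥ 2` be a fixed integer.  With high probability one can add at most
`(1/4 + o(1)) n² / (k-1)` edges to `G(n,1/2)` so that the vertex set of the resulting
graph is covered by `k-1` cliques; in particular, the resulting graph contains no induced
copy of the cycle `C_{2k}`. -/
theorem add_few_edges_to_cover_by_cliques
    (k : ℕ) (hk : 2 ≤ k) (ε : ℝ) (hε : 0 < ε) :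
    Tendsto
      (fun n : ℕ => gnp n (1/2)
        {ω | ∃ G' : SimpleGraph (Fin n), graphOfFn ω ≤ G' ∧
          ((G'.edgeSet \ (graphOfFn ω).edgeSet).ncard : ℝ) ≤
            (1/4 + ε) * (n : ℝ) ^ 2 / ((k : ℝ) - 1) ∧
          (∃ t : Fin (k - 1) → Set (Fin n),
            (∀ i, G'.IsClique (t i)) ∧ (⋃ i, t i) = Set.univ) ∧
          ¬ ∃ S : Set (Fin n), Nonempty (SimpleGraph.cycleGraph (2 * k) ≃g G'.induce S)})
      atTop (nhds 1) := by
  classical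
  have hk1 : (0:ℝ) < (k:ℝ) - 1 := by
    have : (2:ℝ) ≤ (k:ℝ) := by exact_mod_cast hk
    linarith
  set μ : (n : ℕ) → Measure (Sym2 (Fin n) → Bool) := fun n => gnp n (1/2) with hμ
  set E : (n : ℕ) → Finset (Sym2 (Fin n)) := fun n => (pgraph (n/(k-1)+1) n).edgeFinset with hE
  set N : (n : ℕ) → (Sym2 (Fin n) → Bool) → ℝ := fun n => ∑ e ∈ E n, GnpAux.X e with hN
  set c : ℕ → ℝ := fun n => ε * (n:ℝ)^2 / (2*((k:ℝ)-1)) with hc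
  set bound : ℕ → ℝ := fun n => (1/4 + ε) * (n : ℝ) ^ 2 / ((k : ℝ) - 1) with hbound
  set bad : (n : ℕ) → Set (Sym2 (Fin n) → Bool) :=
    fun n => {ω | c n ≤ |N n ω - ((E n).card : ℝ) / 2|} with hbad
  set target : (n : ℕ) → Set (Sym2 (Fin n) → Bool) := fun n =>
    {ω | ∃ G' : SimpleGraph (Fin n), graphOfFn ω ≤ G' ∧
      ((G'.edgeSet \ (graphOfFn ω).edgeSet).ncard : ℝ) ≤ bound n ∧
      (∃ t : Fin (k - 1) → Set (Fin n),
        (∀ i, G'.IsClique (t i)) ∧ (⋃ i, t i) = Set.univ) ∧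
      ¬ ∃ S : Set (Fin n), Nonempty (SimpleGraph.cycleGraph (2 * k) ≃g G'.induce S)} with htarget
  -- pointwise value of N as a card
  have hNcard : ∀ n (ω : Sym2 (Fin n) → Bool),
      N n ω = (((E n).filter fun e => ω e = false).card : ℝ) := by
    intro n ω
    rw [hN]
    simp only [Finset.sum_apply]
    rw [Finset.card_filter, Nat.cast_sum]
    refine Finset.sum_congr rfl fun e _ => ?_
    simp only [GnpAux.X]
    cases h : ω e <;> simp [h]
  -- containment: low N implies target
  have hAsub : ∀ n (ω : Sym2 (Fin n) → Bool), N n ω ≤ bound n → ω ∈ target n := by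
    intro n ω hω
    rw [hNcard] at hω
    exact det_main k n hk ω (bound n) hω
  -- eventually, complement of the good event is inside bad
  have hcompl : ∀ᶠ n in atTop, ∀ ω, ω ∉ target n → ω ∈ bad n := by
    have h1 : ∀ᶠ n : ℕ in atTop, ((k:ℝ)/ε) ≤ (n:ℝ) :=
      (tendsto_natCast_atTop_atTop (R := ℝ)).eventually_ge_atTop _
    filter_upwards [h1, eventually_ge_atTop 1] with n hn hn1 ω hω
    -- key inequality: card (E n) / 2 + c n ≤ bound n
    have hq : ((n/(k-1)+1 : ℕ) : ℝ) ≤ (n:ℝ)/((k:ℝ)-1) + 1 := by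
      push_cast
      have := Nat.cast_div_le (α := ℝ) (m := n) (n := k-1)
      have hcast : ((k-1 : ℕ) : ℝ) = (k:ℝ) - 1 := by
        have : 1 ≤ k := by omega
        push_cast [this]
        ring
      rw [hcast] at this
      linarith
    have hm2 : (2 * (E n).card : ℝ) ≤ (n:ℝ) * ((n:ℝ)/((k:ℝ)-1) + 1) := by
      have := pgraph_edges (n/(k-1)+1) n (Nat.succ_pos _)
      have hcast : (2 * (E n).card : ℝ) ≤ (n:ℝ) * ((n/(k-1)+1 : ℕ) : ℝ) := by
        exact_mod_cast this
      refine le_trans hcast ?_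
      have hn0 : (0:ℝ) ≤ (n:ℝ) := Nat.cast_nonneg n
      nlinarith [hq]
    have hnε : ((k:ℝ)-1) ≤ 2 * ε * (n:ℝ) := by
      have hεn : (k:ℝ) ≤ ε * (n:ℝ) := by
        have := mul_le_mul_of_nonneg_left hn (le_of_lt hε)
        rw [mul_div_cancel₀ _ (ne_of_gt hε)] at this
        linarith
      nlinarith [hε.le, Nat.cast_nonneg (α := ℝ) n]
    have hn0 : (1:ℝ) ≤ (n:ℝ) := by exact_mod_cast hn1
    have hm2' : 2*((E n).card:ℝ)*((k:ℝ)-1) ≤ (n:ℝ)^2 + (n:ℝ)*((k:ℝ)-1) := by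
      have h := mul_le_mul_of_nonneg_right hm2 hk1.le
      have expand : (n:ℝ) * ((n:ℝ)/((k:ℝ)-1) + 1) * ((k:ℝ)-1) = (n:ℝ)^2 + (n:ℝ)*((k:ℝ)-1) := by
        field_simp
      rw [expand] at h
      linarith
    have hkey : ((E n).card : ℝ) / 2 + c n ≤ bound n := by
      have hstep : (n:ℝ)*((k:ℝ)-1) ≤ 2*ε*(n:ℝ)^2 := by
        nlinarith [hnε, Nat.cast_nonneg (α := ℝ) n]
      have goal' : ((E n).card:ℝ)*((k:ℝ)-1) ≤ (n:ℝ)^2/2 + ε*(n:ℝ)^2 := by linarith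
      have e1 : bound n - c n - ((E n).card:ℝ)/2 =
          ((n:ℝ)^2/2 + ε*(n:ℝ)^2 - ((E n).card:ℝ)*((k:ℝ)-1)) / (2*((k:ℝ)-1)) := by
        rw [hc, hbound]
        field_simp
        ring
      have h0 : 0 ≤ bound n - c n - ((E n).card:ℝ)/2 := by
        rw [e1]
        exact div_nonneg (by linarith) (by linarith)
      linarith
    simp only [htarget, Set.mem_setOf_eq] at hω
    have hNω : bound n < N n ω := by
      by_contra hcon
      exact hω (hAsub n ω (le_of_not_gt hcon))
    simp only [hbad, Set.mem_setOf_eq]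
    calc c n ≤ N n ω - ((E n).card : ℝ)/2 := by linarith
      _ ≤ |N n ω - ((E n).card : ℝ)/2| := le_abs_self _
  -- bound on the bad probability
  have hbadle : ∀ᶠ n in atTop,
      μ n (bad n) ≤ ENNReal.ofReal ((((k:ℝ)-1)^2/ε^2) / (n:ℝ)) := by
    filter_upwards [eventually_ge_atTop 1] with n hn1
    have hn0 : (1:ℝ) ≤ (n:ℝ) := by exact_mod_cast hn1
    have hcpos : 0 < c n := by rw [hc]; positivity
    have hch := GnpAux.cheby (E n) (c n) hcpos
    refine le_trans hch (ENNReal.ofReal_le_ofReal ?_)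
    -- card ≤ n^2
    have hq : ((n/(k-1)+1 : ℕ) : ℝ) ≤ (n:ℝ)/((k:ℝ)-1) + 1 := by
      push_cast
      have := Nat.cast_div_le (α := ℝ) (m := n) (n := k-1)
      have hcast : ((k-1 : ℕ) : ℝ) = (k:ℝ) - 1 := by
        have : 1 ≤ k := by omega
        push_cast [this]
        ring
      rw [hcast] at this
      linarith
    have hm2 : (2 * (E n).card : ℝ) ≤ (n:ℝ) * ((n:ℝ)/((k:ℝ)-1) + 1) := by
      have := pgraph_edges (n/(k-1)+1) n (Nat.succ_pos _)
      have hcast : (2 * (E n).card : ℝ) ≤ (n:ℝ) * ((n/(k-1)+1 : ℕ) : ℝ) := by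
        exact_mod_cast this
      refine le_trans hcast ?_
      have hn0' : (0:ℝ) ≤ (n:ℝ) := Nat.cast_nonneg n
      nlinarith [hq]
    have hkR1 : (1:ℝ) ≤ (k:ℝ)-1 := by
      have : (2:ℝ) ≤ (k:ℝ) := by exact_mod_cast hk
      linarith
    have hm2' : 2*((E n).card:ℝ)*((k:ℝ)-1) ≤ (n:ℝ)^2 + (n:ℝ)*((k:ℝ)-1) := by
      have h := mul_le_mul_of_nonneg_right hm2 hk1.le
      have expand : (n:ℝ) * ((n:ℝ)/((k:ℝ)-1) + 1) * ((k:ℝ)-1) = (n:ℝ)^2 + (n:ℝ)*((k:ℝ)-1) := by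
        field_simp
      rw [expand] at h
      linarith
    have hmn : ((E n).card : ℝ) ≤ (n:ℝ)^2 := by
      nlinarith [hm2', hk1, hn0, sq_nonneg ((n:ℝ) - 1)]
    have hnpos : (0:ℝ) < (n:ℝ) := by linarith
    have e2 : (((E n).card:ℝ)/4) / (c n)^2 =
        ((E n).card:ℝ)*((k:ℝ)-1)^2/(ε^2*(n:ℝ)^4) := by
      rw [hc]
      field_simp
      ring
    have e3 : (((k:ℝ)-1)^2/ε^2)/(n:ℝ) = ((k:ℝ)-1)^2*(n:ℝ)^3/(ε^2*(n:ℝ)^4) := by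
      field_simp
    rw [e2, e3, div_le_div_iff_of_pos_right (by positivity)]
    have hn3 : (n:ℝ)^2 ≤ (n:ℝ)^3 := by nlinarith
    nlinarith [sq_nonneg ((k:ℝ)-1), hmn, hn3]
  -- bad probability tends to zero
  have hbad0 : Tendsto (fun n => μ n (bad n)) atTop (nhds 0) := by
    have hδ : Tendsto (fun n : ℕ => ENNReal.ofReal ((((k:ℝ)-1)^2/ε^2) / (n:ℝ))) atTop (nhds 0) := by
      rw [show (0 : ENNReal) = ENNReal.ofReal 0 by simp]
      exact ENNReal.tendsto_ofReal (tendsto_const_div_atTop_nhds_zero_nat _)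
    exact tendsto_of_tendsto_of_tendsto_of_le_of_le' tendsto_const_nhds hδ
      (Eventually.of_forall fun n => zero_le) hbadle
  -- final squeeze
  have hlow : Tendsto (fun n => 1 - μ n (bad n)) atTop (nhds 1) := by
    have := ENNReal.Tendsto.sub (tendsto_const_nhds (x := (1:ENNReal))) hbad0
      (Or.inl ENNReal.one_ne_top)
    simpa using this
  refine tendsto_of_tendsto_of_tendsto_of_le_of_le' hlow tendsto_const_nhds ?_ ?_
  · filter_upwards [hcompl] with n hn
    have hsub : (target n)ᶜ ⊆ bad n := fun ω hω => hn ω hω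
    have h1 : (1:ENNReal) ≤ μ n (target n) + μ n ((target n)ᶜ) := by
      have := measure_union_le (μ := μ n) (target n) ((target n)ᶜ)
      rw [Set.union_compl_self, measure_univ] at this
      exact this
    have h2 : μ n ((target n)ᶜ) ≤ μ n (bad n) := measure_mono hsub
    have : (1:ENNReal) - μ n (bad n) ≤ μ n (target n) := by
      rw [tsub_le_iff_right]
      exact le_trans h1 (add_le_add_right h2 _)
    exact this
  · exact Eventually.of_forall fun n => prob_le_one
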